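/- For an odd prime p = 2q+1 and a natural number k coprime to p, the product over j = 1 to q of cos(jkπ/p) equals (-1)^((k-1)(p²-1)/8) · 2^(−q). -/

import Mathlib

open Real



open Finset

private lemma neg_one_pow_real_congr {m n : ℕ} (h : m % 2 = n % 2) :
    (-1 : ℝ) ^ m = (-1 : ℝ) ^ n := by
  conv_lhs => rw [← Nat.div_add_mod m 2]
  conv_rhs => rw [← Nat.div_add_mod n 2]
  simp [pow_add, pow_mul, h]

private lemma sin_fold (p m : ℕ) (hp : 0 < p) :
    Real.sin ((m : ℝ) * π / p) = (-1 : ℝ) ^ (m / p) * Real.sin (((m % p : ℕ) : ℝ) * π / p) := by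
  have hp' : (p : ℝ) ≠ 0 := Nat.cast_ne_zero.mpr hp.ne'
  have h : ((m % p : ℕ) : ℝ) + (p : ℝ) * ((m / p : ℕ) : ℝ) = (m : ℝ) := by
    exact_mod_cast congrArg (Nat.cast : ℕ → ℝ) (Nat.mod_add_div m p)
  have key : (m : ℝ) * π / p = ((m % p : ℕ) : ℝ) * π / p + ((m / p : ℕ) : ℝ) * π := by
    field_simp
    linear_combination -h
  rw [key, ← Int.cast_natCast (m / p), Real.sin_add_int_mul_pi, zpow_natCast]

private lemma sin_val_eq (p : ℕ) [Fact p.Prime] (v : ZMod p) :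
    Real.sin ((v.val : ℝ) * π / p) = Real.sin ((v.valMinAbs.natAbs : ℝ) * π / p) := by
  have hval : v.val < p := ZMod.val_lt v
  have hp' : (p : ℝ) ≠ 0 := Nat.cast_ne_zero.mpr (by omega)
  rw [ZMod.valMinAbs_def_pos]
  split_ifs with h
  · rw [Int.natAbs_natCast]
  · have h1 : ((v.val : ℤ) - p) = -(((p - v.val : ℕ) : ℤ)) := by
      push_cast [hval.le]; ring
    rw [h1, Int.natAbs_neg, Int.natAbs_natCast]
    have h2 : ((p - v.val : ℕ) : ℝ) * π / p = π - (v.val : ℝ) * π / p := by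
      push_cast [hval.le]
      field_simp
    rw [h2, Real.sin_pi_sub]

private lemma prod_natAbs_fold {M : Type*} [CommMonoid M] (p : ℕ) [Fact p.Prime]
    {a : ZMod p} (ha : a ≠ 0) (f : ℕ → M) :
    ∏ x ∈ Ico 1 (p / 2).succ, f ((a * x : ZMod p).valMinAbs.natAbs) =
      ∏ x ∈ Ico 1 (p / 2).succ, f x := by
  have key := ZMod.Ico_map_valMinAbs_natAbs_eq_Ico_map_id p a ha
  rw [Finset.prod_eq_multiset_prod, Finset.prod_eq_multiset_prod,
    show (fun x : ℕ => f ((a * x : ZMod p).valMinAbs.natAbs)) =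
      f ∘ (fun x : ℕ => (a * x : ZMod p).valMinAbs.natAbs) from rfl,
    ← Multiset.map_map, key, Multiset.map_map]
  rfl

private lemma sum_natAbs_fold {M : Type*} [AddCommMonoid M] (p : ℕ) [Fact p.Prime]
    {a : ZMod p} (ha : a ≠ 0) (f : ℕ → M) :
    ∑ x ∈ Ico 1 (p / 2).succ, f ((a * x : ZMod p).valMinAbs.natAbs) =
      ∑ x ∈ Ico 1 (p / 2).succ, f x := by
  have key := ZMod.Ico_map_valMinAbs_natAbs_eq_Ico_map_id p a ha
  rw [Finset.sum_eq_multiset_sum, Finset.sum_eq_multiset_sum,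
    show (fun x : ℕ => f ((a * x : ZMod p).valMinAbs.natAbs)) =
      f ∘ (fun x : ℕ => (a * x : ZMod p).valMinAbs.natAbs) from rfl,
    ← Multiset.map_map, key, Multiset.map_map]
  rfl

private lemma prod_sin_formula (p q : ℕ) [Fact p.Prime] (hpq : p = 2 * q + 1)
    {a : ℕ} (ha : (a : ZMod p) ≠ 0) :
    ∏ j ∈ Icc 1 q, Real.sin (((j * a : ℕ) : ℝ) * π / p) =
      (-1 : ℝ) ^ (∑ j ∈ Icc 1 q, j * a / p) *
        ∏ j ∈ Icc 1 q, Real.sin ((j : ℝ) * π / p) := by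
  have hp0 : 0 < p := by omega
  have hq2 : p / 2 = q := by omega
  have hIcc : Icc 1 q = Ico 1 (p / 2).succ := by rw [hq2, Nat.succ_eq_add_one, Finset.Ico_add_one_right_eq_Icc]
  calc ∏ j ∈ Icc 1 q, Real.sin (((j * a : ℕ) : ℝ) * π / p)
      = ∏ j ∈ Icc 1 q, ((-1 : ℝ) ^ (j * a / p) *
          Real.sin (((j * a % p : ℕ) : ℝ) * π / p)) :=
        Finset.prod_congr rfl fun j _ => sin_fold p (j * a) hp0
    _ = (-1 : ℝ) ^ (∑ j ∈ Icc 1 q, j * a / p) *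
          ∏ j ∈ Icc 1 q, Real.sin (((j * a % p : ℕ) : ℝ) * π / p) := by
        rw [Finset.prod_mul_distrib, Finset.prod_pow_eq_pow_sum]
    _ = _ := by
        congr 1
        have hval : ∀ j : ℕ, ((j * a % p : ℕ) : ℝ) = (((a : ZMod p) * j).val : ℝ) := by
          intro j
          have : ((a : ZMod p) * j) = ((j * a : ℕ) : ZMod p) := by push_cast; ring
          rw [this, ZMod.val_natCast]
        calc ∏ j ∈ Icc 1 q, Real.sin (((j * a % p : ℕ) : ℝ) * π / p)
            = ∏ j ∈ Ico 1 (p / 2).succ,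
                Real.sin ((((a : ZMod p) * j).valMinAbs.natAbs : ℝ) * π / p) := by
              rw [← hIcc]
              exact Finset.prod_congr rfl fun j _ => by rw [hval j, sin_val_eq]
          _ = ∏ j ∈ Ico 1 (p / 2).succ, Real.sin ((j : ℝ) * π / p) :=
              prod_natAbs_fold p ha (fun n => Real.sin ((n : ℝ) * π / p))
          _ = _ := by rw [hIcc]

private lemma prod_sin_pos (p q : ℕ) (hpq : p = 2 * q + 1) :
    0 < ∏ j ∈ Icc 1 q, Real.sin ((j : ℝ) * π / p) := by
  apply Finset.prod_pos
  intro j hj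
  rw [Finset.mem_Icc] at hj
  have hp0 : (0 : ℝ) < p := by exact_mod_cast (by omega : 0 < p)
  apply Real.sin_pos_of_pos_of_lt_pi
  · have hj0 : (0 : ℝ) < j := by exact_mod_cast (by omega : 0 < j)
    exact div_pos (mul_pos hj0 Real.pi_pos) hp0
  · rw [div_lt_iff₀ hp0]
    have hjp : (j : ℝ) < p := by exact_mod_cast (by omega : j < p)
    nlinarith [Real.pi_pos]

private lemma neg_one_pow_int_inj {m n : ℕ} (h : (-1 : ℤ) ^ m = (-1) ^ n) :
    m % 2 = n % 2 := by
  rcases Nat.even_or_odd m with hm | hm <;> rcases Nat.even_or_odd n with hn | hn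
  · rw [Nat.even_iff] at hm hn; omega
  · rw [hm.neg_one_pow, hn.neg_one_pow] at h; norm_num at h
  · rw [hm.neg_one_pow, hn.neg_one_pow] at h; norm_num at h
  · rw [Nat.odd_iff] at hm hn; omega

private lemma val_zmod2 (p : ℕ) [Fact p.Prime] (hodd : p % 2 = 1) (v : ZMod p) :
    ((v.val : ℕ) : ZMod 2) =
      (v.valMinAbs.natAbs : ZMod 2) + (if p / 2 < v.val then 1 else 0) := by
  have hval : v.val < p := ZMod.val_lt v
  have hp2 : (p : ZMod 2) = 1 := by
    rw [← ZMod.natCast_mod p 2, hodd, Nat.cast_one]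
  rw [ZMod.valMinAbs_def_pos]
  split_ifs with h h2 h3
  · omega
  · rw [Int.natAbs_natCast, add_zero]
  · have h1 : ((v.val : ℤ) - p) = -(((p - v.val : ℕ) : ℤ)) := by
      push_cast [hval.le]; ring
    rw [h1, Int.natAbs_neg, Int.natAbs_natCast, Nat.cast_sub hval.le, hp2]
    have : ∀ x : ZMod 2, x = 1 - x + 1 := by decide
    exact this _
  · omega

private lemma aux_count (p q : ℕ) [Fact p.Prime] (hpq : p = 2 * q + 1) {a : ℕ}
    (ha : (a : ZMod p) ≠ 0) :
    ((a * ∑ j ∈ Icc 1 q, j : ℕ) : ZMod 2)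
      = ((∑ j ∈ Icc 1 q, j * a / p : ℕ) : ZMod 2) + ((∑ j ∈ Icc 1 q, j : ℕ) : ZMod 2)
        + ((#(Finset.filter (fun x : ℕ => p / 2 < ((a : ZMod p) * x).val) (Icc 1 q)) : ℕ)
            : ZMod 2) := by
  have hp0 : 0 < p := by omega
  have hodd : p % 2 = 1 := by omega
  have hq2 : p / 2 = q := by omega
  have hIcc : Icc 1 q = Ico 1 (p / 2).succ := by rw [hq2, Nat.succ_eq_add_one, Finset.Ico_add_one_right_eq_Icc]
  have hp2 : (p : ZMod 2) = 1 := by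
    rw [← ZMod.natCast_mod p 2, hodd, Nat.cast_one]
  have hval : ∀ j : ℕ, j * a % p = ((a : ZMod p) * j).val := by
    intro j
    have : ((a : ZMod p) * j) = ((j * a : ℕ) : ZMod p) := by push_cast; ring
    rw [this, ZMod.val_natCast]
  calc ((a * ∑ j ∈ Icc 1 q, j : ℕ) : ZMod 2)
      = ∑ j ∈ Icc 1 q, ((j * a : ℕ) : ZMod 2) := by
        push_cast
        rw [Finset.mul_sum]
        exact Finset.sum_congr rfl fun j _ => mul_comm _ _
    _ = ∑ j ∈ Icc 1 q, ((p * (j * a / p) + j * a % p : ℕ) : ZMod 2) :=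
        Finset.sum_congr rfl fun j _ => by rw [Nat.div_add_mod]
    _ = ((∑ j ∈ Icc 1 q, j * a / p : ℕ) : ZMod 2)
          + ∑ j ∈ Icc 1 q, ((j * a % p : ℕ) : ZMod 2) := by
        push_cast [hp2]
        rw [Finset.sum_add_distrib]
        simp [one_mul]
    _ = _ := by
        rw [add_assoc]
        congr 1
        calc ∑ j ∈ Icc 1 q, ((j * a % p : ℕ) : ZMod 2)
            = ∑ j ∈ Icc 1 q, ((((a : ZMod p) * j).valMinAbs.natAbs : ZMod 2)
                + (if p / 2 < ((a : ZMod p) * j).val then 1 else 0)) :=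
              Finset.sum_congr rfl fun j _ => by rw [hval j, val_zmod2 p hodd]
          _ = (∑ j ∈ Icc 1 q, (((a : ZMod p) * j).valMinAbs.natAbs : ZMod 2))
                + ∑ j ∈ Icc 1 q, (if p / 2 < ((a : ZMod p) * j).val then 1 else 0) :=
              Finset.sum_add_distrib
          _ = _ := by
              congr 1
              · rw [hIcc]
                rw [sum_natAbs_fold p ha (fun n : ℕ => ((n : ℕ) : ZMod 2))]
                rw [← hIcc]
                push_cast
                rfl
              · rw [Finset.sum_boole]

private lemma T_parity (q T : ℕ) (hT2 : T * 2 = q * (q + 1)) :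
    T % 2 = (q - q / 2) % 2 := by
  rcases Nat.even_or_odd q with ⟨m, rfl⟩ | ⟨m, rfl⟩
  · obtain ⟨u, hu⟩ : ∃ u, u = m * m := ⟨_, rfl⟩
    have h : (m + m) * ((m + m) + 1) = (2 * u + m) * 2 := by rw [hu]; ring
    rw [h] at hT2
    omega
  · obtain ⟨u, hu⟩ : ∃ u, u = m * m := ⟨_, rfl⟩
    have h : (2 * m + 1) * ((2 * m + 1) + 1) = (2 * u + 3 * m + 1) * 2 := by rw [hu]; ring
    rw [h] at hT2
    omega

private lemma parity_lemma (p q k : ℕ) [Fact p.Prime] (hpq : p = 2 * q + 1) (hk : 0 < k)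
    (hk0 : (k : ZMod p) ≠ 0) (h2k0 : ((2 * k : ℕ) : ZMod p) ≠ 0) :
    (∑ j ∈ Icc 1 q, j * (2 * k) / p + ∑ j ∈ Icc 1 q, j * k / p) % 2
      = ((k - 1) * (p ^ 2 - 1) / 8) % 2 := by
  have hp : p.Prime := Fact.out
  have hq1 : 1 ≤ q := by have := hp.two_le; omega
  have hp2 : p ≠ 2 := by omega
  have hq2 : p / 2 = q := by omega
  have hIcc : Ico 1 (p / 2).succ = Icc 1 q := by rw [hq2, Nat.succ_eq_add_one, Finset.Ico_add_one_right_eq_Icc]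
  -- counting congruences from aux_count
  have hBmod : (k * ∑ j ∈ Icc 1 q, j) % 2
      = (∑ j ∈ Icc 1 q, j * k / p + (∑ j ∈ Icc 1 q, j)
          + #(Finset.filter (fun x : ℕ => p / 2 < ((k : ZMod p) * x).val) (Icc 1 q))) % 2 := by
    have h := aux_count p q hpq hk0
    rw [← Nat.cast_add, ← Nat.cast_add] at h
    exact (ZMod.natCast_eq_natCast_iff' _ _ _).mp h
  have hAmod : ((2 * k) * ∑ j ∈ Icc 1 q, j) % 2
      = (∑ j ∈ Icc 1 q, j * (2 * k) / p + (∑ j ∈ Icc 1 q, j)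
          + #(Finset.filter (fun x : ℕ => p / 2 < (((2 * k : ℕ) : ZMod p) * x).val)
              (Icc 1 q))) % 2 := by
    have h := aux_count p q hpq h2k0
    rw [← Nat.cast_add, ← Nat.cast_add] at h
    exact (ZMod.natCast_eq_natCast_iff' _ _ _).mp h
  -- Gauss's lemma three times
  have h2cast : (((2 : ℕ) : ℤ) : ZMod p) ≠ 0 := by
    rw [Int.cast_natCast, Ne, ZMod.natCast_eq_zero_iff]
    intro hdvd
    have := Nat.le_of_dvd (by norm_num) hdvd
    omega
  have hkcast : (((k : ℕ) : ℤ) : ZMod p) ≠ 0 := by rwa [Int.cast_natCast]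
  have h2kcast : (((2 * k : ℕ) : ℤ) : ZMod p) ≠ 0 := by rwa [Int.cast_natCast]
  have hg2 := ZMod.gauss_lemma hp2 h2cast
  have hgk := ZMod.gauss_lemma hp2 hkcast
  have hg2k := ZMod.gauss_lemma hp2 h2kcast
  simp only [Int.cast_natCast] at hg2 hgk hg2k
  rw [hIcc] at hg2 hgk hg2k
  rw [Nat.cast_mul, legendreSym.mul] at hg2k
  have hsq : legendreSym p ((k : ℕ) : ℤ) ^ 2 = 1 := legendreSym.sq_one p hkcast
  have hcomb : (-1 : ℤ) ^ (#(Finset.filter (fun x : ℕ =>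
        p / 2 < (((2 * k : ℕ) : ZMod p) * x).val) (Icc 1 q))
      + #(Finset.filter (fun x : ℕ => p / 2 < ((k : ZMod p) * x).val) (Icc 1 q)))
      = (-1 : ℤ) ^ #(Finset.filter (fun x : ℕ =>
          p / 2 < (((2 : ℕ) : ZMod p) * x).val) (Icc 1 q)) := by
    have h2k' : ((2 * k : ℕ) : ZMod p) = ((2 : ℕ) : ZMod p) * ((k : ℕ) : ZMod p) := by
      push_cast; ring
    simp only [h2k'] at hg2k ⊢
    rw [pow_add, ← hg2k, ← hgk]
    calc legendreSym p ((2 : ℕ) : ℤ) * legendreSym p ((k : ℕ) : ℤ) * legendreSym p ((k : ℕ) : ℤ)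
        = legendreSym p ((2 : ℕ) : ℤ) * legendreSym p ((k : ℕ) : ℤ) ^ 2 := by ring
      _ = legendreSym p ((2 : ℕ) : ℤ) := by rw [hsq, mul_one]
      _ = _ := hg2
  have hGmod := neg_one_pow_int_inj hcomb
  -- value of μ₂
  have hval2 : ∀ x ∈ Icc 1 q, (((2 : ℕ) : ZMod p) * x).val = 2 * x := by
    intro x hx
    rw [Finset.mem_Icc] at hx
    have h' : ((2 : ℕ) : ZMod p) * x = ((2 * x : ℕ) : ZMod p) := by push_cast; ring
    rw [h', ZMod.val_natCast_of_lt (by omega)]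
  have hμ2eq : #(Finset.filter (fun x : ℕ => p / 2 < (((2 : ℕ) : ZMod p) * x).val) (Icc 1 q))
      = q - q / 2 := by
    rw [Finset.filter_congr (fun x hx => by rw [hval2 x hx, hq2] :
      ∀ x ∈ Icc 1 q, (p / 2 < (((2 : ℕ) : ZMod p) * x).val) ↔ (q < 2 * x))]
    have hset : Finset.filter (fun x : ℕ => q < 2 * x) (Icc 1 q) = Icc (q / 2 + 1) q := by
      ext x
      simp only [Finset.mem_filter, Finset.mem_Icc]
      omega
    rw [hset, Nat.card_Icc]
    omega
  -- value and parity of T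
  have hT2 : (∑ j ∈ Icc 1 q, j) * 2 = q * (q + 1) := by
    have h1 : ∑ j ∈ Icc 1 q, j = ∑ j ∈ range (q + 1), j := by
      rw [Finset.range_eq_Ico, Finset.sum_eq_sum_Ico_succ_bot (by omega : 0 < q + 1),
        Finset.Ico_add_one_right_eq_Icc, zero_add]
    rw [h1, Finset.sum_range_id_mul_two]
    simp [Nat.add_sub_cancel, Nat.mul_comm]
  have hTpar := T_parity q _ hT2
  -- the exponent on the right
  have hN : p ^ 2 = 4 * (q * (q + 1)) + 1 := by subst hpq; ring
  have h81 : p ^ 2 - 1 = 8 * ∑ j ∈ Icc 1 q, j := by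
    have h4 : p ^ 2 - 1 = 4 * (q * (q + 1)) := Nat.sub_eq_of_eq_add hN
    rw [h4, ← hT2]; ring
  have hE : (k - 1) * (p ^ 2 - 1) / 8 = (k - 1) * ∑ j ∈ Icc 1 q, j := by
    rw [h81, show (k - 1) * (8 * ∑ j ∈ Icc 1 q, j) = ((k - 1) * ∑ j ∈ Icc 1 q, j) * 8 from by
      ring, Nat.mul_div_cancel _ (by norm_num)]
  have hkT : (k - 1) * (∑ j ∈ Icc 1 q, j) + (∑ j ∈ Icc 1 q, j) = k * ∑ j ∈ Icc 1 q, j := by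
    calc (k - 1) * (∑ j ∈ Icc 1 q, j) + (∑ j ∈ Icc 1 q, j)
        = ((k - 1) + 1) * ∑ j ∈ Icc 1 q, j := by ring
      _ = _ := by rw [Nat.sub_add_cancel hk]
  have h2kT : (2 * k) * (∑ j ∈ Icc 1 q, j) = 2 * (k * ∑ j ∈ Icc 1 q, j) := by ring
  rw [h2kT] at hAmod
  rw [hE]
  generalize hd : (k - 1) * (∑ j ∈ Icc 1 q, j) = d at hkT ⊢
  generalize hc : k * (∑ j ∈ Icc 1 q, j) = c at hBmod hAmod hkT
  omega


theorem cos_product_coprime (p q k : ℕ) [Fact p.Prime] (hpq : p = 2 * q + 1)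
    (hk : 0 < k) (hcop : Nat.Coprime k p) :
    ∏ j ∈ Finset.Icc 1 q, Real.cos (j * k * Real.pi / p) =
      (-1) ^ (((k - 1) * (p ^ 2 - 1)) / 8) * (2 : ℝ) ^ (-(q : ℤ)) := by
  have hp : p.Prime := Fact.out
  have hq1 : 1 ≤ q := by have := hp.two_le; omega
  have hp0 : 0 < p := by omega
  have hpR : (0 : ℝ) < p := by exact_mod_cast hp0
  have hkp : ¬ p ∣ k := by
    intro h
    have := Nat.le_of_dvd one_pos (hcop ▸ Nat.dvd_gcd h dvd_rfl)
    omega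
  have hk0 : (k : ZMod p) ≠ 0 := by
    rw [Ne, ZMod.natCast_eq_zero_iff]; exact hkp
  have h2k0 : ((2 * k : ℕ) : ZMod p) ≠ 0 := by
    rw [Ne, ZMod.natCast_eq_zero_iff]
    intro h
    rcases (Nat.Prime.dvd_mul hp).mp h with h' | h'
    · have := Nat.le_of_dvd (by norm_num) h'; omega
    · exact hkp h'
  have hne : ∀ j ∈ Icc 1 q, Real.sin (((j * k : ℕ) : ℝ) * π / p) ≠ 0 := by
    intro j hj
    rw [Finset.mem_Icc] at hj
    have hjk : ¬ p ∣ j * k := by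
      intro h
      rcases (Nat.Prime.dvd_mul hp).mp h with h' | h'
      · have := Nat.le_of_dvd (by omega) h'; omega
      · exact hkp h'
    have hmod1 : 1 ≤ j * k % p := by
      rcases Nat.eq_zero_or_pos (j * k % p) with h0 | h0
      · exact absurd (Nat.dvd_of_mod_eq_zero h0) hjk
      · exact h0
    have hmodlt : j * k % p < p := Nat.mod_lt _ hp0
    rw [sin_fold p (j * k) hp0]
    apply mul_ne_zero (pow_ne_zero _ (by norm_num))
    have hpos : 0 < Real.sin (((j * k % p : ℕ) : ℝ) * π / p) := by
      apply Real.sin_pos_of_pos_of_lt_pi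
      · have hj0 : (0 : ℝ) < ((j * k % p : ℕ) : ℝ) := by exact_mod_cast hmod1
        exact div_pos (mul_pos hj0 Real.pi_pos) hpR
      · rw [div_lt_iff₀ hpR]
        have : ((j * k % p : ℕ) : ℝ) < p := by exact_mod_cast hmodlt
        nlinarith [Real.pi_pos]
    exact hpos.ne'
  have hcos : ∀ j ∈ Icc 1 q, Real.cos ((j : ℝ) * k * π / p)
      = Real.sin (((j * (2 * k) : ℕ) : ℝ) * π / p)
        / (2 * Real.sin (((j * k : ℕ) : ℝ) * π / p)) := by
    intro j hj
    have hne' := hne j hj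
    have harg : ((j * (2 * k) : ℕ) : ℝ) * π / p = 2 * (((j * k : ℕ) : ℝ) * π / p) := by
      push_cast; ring
    have hjk : (j : ℝ) * k * π / p = ((j * k : ℕ) : ℝ) * π / p := by push_cast; ring
    rw [harg, Real.sin_two_mul, hjk]
    exact (mul_div_cancel_left₀ _ (mul_ne_zero two_ne_zero hne')).symm
  rw [Finset.prod_congr rfl hcos, Finset.prod_div_distrib, Finset.prod_mul_distrib,
    Finset.prod_const, Nat.card_Icc, prod_sin_formula p q hpq h2k0,
    prod_sin_formula p q hpq hk0]
  have hS := prod_sin_pos p q hpq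
  have hSne : (∏ j ∈ Icc 1 q, Real.sin ((j : ℝ) * π / p)) ≠ 0 := ne_of_gt hS
  have hq' : q + 1 - 1 = q := by omega
  rw [hq']
  have hsign := neg_one_pow_real_congr (parity_lemma p q k hpq hk hk0 h2k0)
  rw [show ((2 : ℝ) ^ (-(q : ℤ))) = ((2 : ℝ) ^ q)⁻¹ by rw [zpow_neg, zpow_natCast]]
  have h2q : ((2 : ℝ) ^ q) ≠ 0 := by positivity
  have hBne : ((-1 : ℝ) ^ (∑ j ∈ Icc 1 q, j * k / p)) ≠ 0 := pow_ne_zero _ (by norm_num)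
  rw [div_eq_iff (mul_ne_zero h2q (mul_ne_zero hBne hSne)), ← hsign, pow_add]
  have hBB : (-1 : ℝ) ^ (∑ j ∈ Icc 1 q, j * k / p) * (-1 : ℝ) ^ (∑ j ∈ Icc 1 q, j * k / p)
      = 1 := by
    rw [← pow_add]; exact Even.neg_one_pow ⟨_, rfl⟩
  rw [show (-1 : ℝ) ^ (∑ j ∈ Icc 1 q, j * (2 * k) / p) * (-1 : ℝ) ^ (∑ j ∈ Icc 1 q, j * k / p)
        * ((2 : ℝ) ^ q)⁻¹ * (2 ^ q * ((-1 : ℝ) ^ (∑ j ∈ Icc 1 q, j * k / p)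
          * ∏ j ∈ Icc 1 q, Real.sin ((j : ℝ) * π / p)))
      = ((-1 : ℝ) ^ (∑ j ∈ Icc 1 q, j * k / p) * (-1 : ℝ) ^ (∑ j ∈ Icc 1 q, j * k / p))
        * (((2 : ℝ) ^ q)⁻¹ * 2 ^ q) * ((-1 : ℝ) ^ (∑ j ∈ Icc 1 q, j * (2 * k) / p)
          * ∏ j ∈ Icc 1 q, Real.sin ((j : ℝ) * π / p)) from by ring,
    hBB, inv_mul_cancel₀ h2q, one_mul, one_mul]
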